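/- In the rise-decoupled marked graph protocol for a circuit c, if a marking m is reachable from the initial marking by executing a trace t, and latch l has a right neighbor l' such that the place (l- → l'-) has positive marking in m, then latch l is opaque after trace t. -/

import Mathlib

open scoped Classical
noncomputable section

/-! ### Marked graphs -/

structure MarkedGraph (T : Type) where
  place : T → T → Type
  initMarking : ∀ t1 t2, place t1 t2 → ℕ

def Marking {T : Type} (M : MarkedGraph T) : Type :=
  ∀ t1 t2, M.place t1 t2 → ℕ

/-- A transition is enabled if all of its input places carry positive marking. -/
def MarkedGraph.enabled {T : Type} (M : MarkedGraph T) (t : T) (m : Marking M) : Prop :=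
  ∀ t0 (p : M.place t0 t), 0 < m t0 t p

/-- Firing a transition decrements its input places and increments its output places. -/
def MarkedGraph.fire {T : Type} (M : MarkedGraph T) (t : T) (m : Marking M) : Marking M :=
  fun t1 t2 p =>
    if t1 = t ∧ t2 = t then m t1 t2 p
    else if t2 = t then m t1 t2 p - 1
    else if t1 = t then m t1 t2 p + 1
    else m t1 t2 p

/-- Reachability of a marking by a list of transitions, fired in order.
The *head* of the list is the most recently fired transition. -/
inductive MarkedGraph.reaches {T : Type} (M : MarkedGraph T) : List T → Marking M → Prop
  | nil : M.reaches [] M.initMarking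
  | cons {ls : List T} {m : Marking M} {t : T} :
      M.reaches ls m → M.enabled t m → M.reaches (t :: ls) (M.fire t m)

/-- A path of places: consecutive places share a transition. -/
inductive MarkedGraph.Path {T : Type} (M : MarkedGraph T) : T → T → Type
  | single {t1 t2 : T} : M.place t1 t2 → M.Path t1 t2
  | cons {t1 t2 t3 : T} : M.place t1 t2 → M.Path t2 t3 → M.Path t1 t3

/-- The total marking of a path: the sum of the markings of its places. -/
def MarkedGraph.pathMarking {T : Type} {M : MarkedGraph T} (m : Marking M) :
    ∀ {t1 t2 : T}, M.Path t1 t2 → ℕ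
  | _, _, .single p => m _ _ p
  | _, _, .cons p ps => m _ _ p + MarkedGraph.pathMarking m ps

/-- One marked graph refines another if every list of transitions executable
in the first is also executable in the second. -/
def MarkedGraph.refines {T : Type} (M1 M2 : MarkedGraph T) : Prop :=
  ∀ ls : List T, (∃ m, M1.reaches ls m) → ∃ m, M2.reaches ls m

/-! ### Circuits -/

inductive Value
  | Num : ℕ → Value
  | X : Value

inductive Latch (even odd : Type)
  | E : even → Latch even odd
  | O : odd → Latch even odd

def Latch.isOdd {even odd : Type} : Latch even odd → Bool
  | .E _ => false
  | .O _ => true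

inductive Event (L : Type)
  | Rise : L → Event L
  | Fall : L → Event L

/-- Number of occurrences of an event in a trace. -/
def numEvents {L : Type} (e : Event L) : List (Event L) → ℕ
  | [] => 0
  | e' :: t => (if e' = e then 1 else 0) + numEvents e t

structure Circuit (even odd : Type) where
  evenOddNeighbors : List (even × odd)
  oddEvenNeighbors : List (odd × even)
  nextStateE : even → (odd → Value) → Value
  nextStateO : odd → (even → Value) → Value

/-- `c.neighbor l l'` : `l` is a left neighbor of `l'`. -/
def Circuit.neighbor {even odd : Type} (c : Circuit even odd) :
    Latch even odd → Latch even odd → Prop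
  | .E e, .O o => (e, o) ∈ c.evenOddNeighbors
  | .O o, .E e => (o, e) ∈ c.oddEvenNeighbors
  | _, _ => False

/-- Next-state function of a latch, from the values of its left neighbors. -/
def Circuit.nextState {even odd : Type} (c : Circuit even odd)
    (st : Latch even odd → Value) : Latch even odd → Value
  | .E e => c.nextStateE e (fun o => st (.O o))
  | .O o => c.nextStateO o (fun e => st (.E e))

/-! ### Synchronous execution : odd latches update first each cycle -/

def Circuit.syncE {even odd : Type} (c : Circuit even odd)
    (st0 : Latch even odd → Value) : ℕ → even → Value
  | 0, e => st0 (.E e)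
  | n+1, e => c.nextStateE e (fun o => c.nextStateO o (fun e' => c.syncE st0 n e'))

def Circuit.syncO {even odd : Type} (c : Circuit even odd)
    (st0 : Latch even odd → Value) : ℕ → odd → Value
  | 0, _ => Value.X
  | n+1, o => c.nextStateO o (fun e => c.syncE st0 n e)

/-- Synchronous execution of a circuit. -/
def Circuit.sync {even odd : Type} (c : Circuit even odd)
    (st0 : Latch even odd → Value) (n : ℕ) : Latch even odd → Value
  | .E e => c.syncE st0 n e
  | .O o => c.syncO st0 n o

/-! ### Traces, transparency, asynchronous execution -/

inductive Transparency
  | Transparent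
  | Opaque

/-- Transparency of a latch after a trace (head of the list = latest event):
odd latches start transparent, even latches start opaque. -/
def transparency {even odd : Type} :
    List (Event (Latch even odd)) → Latch even odd → Transparency
  | [], l => if l.isOdd then .Transparent else .Opaque
  | .Rise l' :: t, l => if l' = l then .Transparent else transparency t l
  | .Fall l' :: t, l => if l' = l then .Opaque else transparency t l

/-- Asynchronous execution of a trace on a circuit. -/
inductive Circuit.async {even odd : Type} (c : Circuit even odd)
    (st0 : Latch even odd → Value) :
    List (Event (Latch even odd)) → Latch even odd → Transparency → Value → Prop
  | async_transparent (t : List (Event (Latch even odd))) (l : Latch even odd)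
      (st : Latch even odd → Value) :
      transparency t l = .Transparent →
      (∀ l', c.neighbor l' l → c.async st0 t l' (transparency t l') (st l')) →
      c.async st0 t l .Transparent (c.nextState st l)
  | async_nil (e : even) :
      c.async st0 [] (.E e) .Opaque (st0 (.E e))
  | async_opaque (l : Latch even odd) (ev : Event (Latch even odd))
      (t : List (Event (Latch even odd))) (v : Value) :
      transparency (ev :: t) l = .Opaque →
      ev ≠ .Fall l →
      c.async st0 t l .Opaque v →
      c.async st0 (ev :: t) l .Opaque v
  | async_opaque_fall (l : Latch even odd) (t : List (Event (Latch even odd)))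
      (st : Latch even odd → Value) :
      (∀ l', c.neighbor l' l → c.async st0 t l' (transparency t l') (st l')) →
      c.async st0 (.Fall l :: t) l .Opaque (c.nextState st l)

/-- Flow equivalence of a marked-graph protocol for a circuit and initial state. -/
def flowEquivalence {even odd : Type} (M : MarkedGraph (Event (Latch even odd)))
    (c : Circuit even odd) (st0 : Latch even odd → Value) : Prop :=
  ∀ (l : Latch even odd) (t : List (Event (Latch even odd))) (v : Value),
    (∃ m, M.reaches t m) →
    c.async st0 t l .Opaque v →
    v = c.sync st0 (numEvents (.Fall l) t) l

/-! ### The rise-decoupled (fully-decoupled) protocol -/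

inductive RDPlace {even odd : Type} (c : Circuit even odd) :
    Event (Latch even odd) → Event (Latch even odd) → Type
  | fall (l : Latch even odd) : RDPlace c (.Rise l) (.Fall l)
  | rise (l : Latch even odd) : RDPlace c (.Fall l) (.Rise l)
  /-- `a- → b-` for `a` a left neighbor of `b`. -/
  | fallFall (a b : Latch even odd) : c.neighbor a b → RDPlace c (.Fall a) (.Fall b)
  /-- `b- → a+` for `a` a left neighbor of `b`. -/
  | fallRise (a b : Latch even odd) : c.neighbor a b → RDPlace c (.Fall b) (.Rise a)

def riseDecoupled {even odd : Type} (c : Circuit even odd) :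
    MarkedGraph (Event (Latch even odd)) where
  place := RDPlace c
  initMarking := fun _ _ p =>
    match p with
    | .fall l => if l.isOdd then 1 else 0
    | .rise l => if l.isOdd then 0 else 1
    | .fallFall a _ _ => if a.isOdd then 0 else 1
    | .fallRise _ _ _ => 0

/-! ### The fall-decoupled protocol -/

inductive FDPlace {even odd : Type} (c : Circuit even odd) :
    Event (Latch even odd) → Event (Latch even odd) → Type
  | fall (l : Latch even odd) : FDPlace c (.Rise l) (.Fall l)
  | rise (l : Latch even odd) : FDPlace c (.Fall l) (.Rise l)
  /-- `a+ → b+` for `a` a left neighbor of `b`: a latch rises only after its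
  left neighbors' corresponding rises. -/
  | riseRise (a b : Latch even odd) : c.neighbor a b → FDPlace c (.Rise a) (.Rise b)
  /-- `b+ → a+` for `a` a left neighbor of `b`. -/
  | riseRise' (a b : Latch even odd) : c.neighbor a b → FDPlace c (.Rise b) (.Rise a)

def fallDecoupled {even odd : Type} (c : Circuit even odd) :
    MarkedGraph (Event (Latch even odd)) where
  place := FDPlace c
  initMarking := fun _ _ p =>
    match p with
    | .fall l => if l.isOdd then 1 else 0
    | .rise l => if l.isOdd then 0 else 1
    | .riseRise a _ _ => if a.isOdd then 1 else 0
    | .riseRise' _ b _ => if b.isOdd then 1 else 0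

/-! ### The semi-decoupled protocol (less concurrent than rise-decoupled) -/

inductive SDPlace {even odd : Type} (c : Circuit even odd) :
    Event (Latch even odd) → Event (Latch even odd) → Type
  | fall (l : Latch even odd) : SDPlace c (.Rise l) (.Fall l)
  | rise (l : Latch even odd) : SDPlace c (.Fall l) (.Rise l)
  | fallFall (a b : Latch even odd) : c.neighbor a b → SDPlace c (.Fall a) (.Fall b)
  | fallRise (a b : Latch even odd) : c.neighbor a b → SDPlace c (.Fall b) (.Rise a)
  /-- Extra synchronization arc `b+ → a+` making the protocol less concurrent. -/
  | riseRise (a b : Latch even odd) : c.neighbor a b → SDPlace c (.Rise b) (.Rise a)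

def semiDecoupled {even odd : Type} (c : Circuit even odd) :
    MarkedGraph (Event (Latch even odd)) where
  place := SDPlace c
  initMarking := fun _ _ p =>
    match p with
    | .fall l => if l.isOdd then 1 else 0
    | .rise l => if l.isOdd then 0 else 1
    | .fallFall a _ _ => if a.isOdd then 0 else 1
    | .fallRise _ _ _ => 0
    | .riseRise _ b _ => if b.isOdd then 1 else 0

/-! ### The desynchronization protocol -/

inductive DPlace {even odd : Type} (c : Circuit even odd) :
    Event (Latch even odd) → Event (Latch even odd) → Type
  | fall (l : Latch even odd) : DPlace c (.Rise l) (.Fall l)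
  | rise (l : Latch even odd) : DPlace c (.Fall l) (.Rise l)
  /-- `a+ → b-` for `a` a left neighbor of `b`. -/
  | riseFall (a b : Latch even odd) : c.neighbor a b → DPlace c (.Rise a) (.Fall b)
  /-- `b- → a+` for `a` a left neighbor of `b`. -/
  | fallRise (a b : Latch even odd) : c.neighbor a b → DPlace c (.Fall b) (.Rise a)

def desynchronization {even odd : Type} (c : Circuit even odd) :
    MarkedGraph (Event (Latch even odd)) where
  place := DPlace c
  initMarking := fun _ _ p =>
    match p with
    | .fall l => if l.isOdd then 1 else 0
    | .rise l => if l.isOdd then 0 else 1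
    | .riseFall _ _ _ => 1
    | .fallRise _ _ _ => 0

/-! ### The three-stage increment pipeline SRC → A → B → C → SNK -/

inductive EvenLatchP
  | A
  | C

inductive OddLatchP
  | SRC
  | B
  | SNK

def incValue : Value → Value
  | .Num n => .Num (n + 1)
  | .X => .Num 0

def pipeline : Circuit EvenLatchP OddLatchP where
  evenOddNeighbors := [(.A, .SRC), (.A, .B), (.C, .SNK)]
  oddEvenNeighbors := [(.SRC, .A), (.B, .C), (.SNK, .C)]
  nextStateE := fun e st =>
    match e with
    | .A => st .SRC
    | .C => incValue (st .B)
  nextStateO := fun o st =>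
    match o with
    | .SRC => incValue (st .A)
    | .B => incValue (st .A)
    | .SNK => .Num 0

def pipelineInit : Latch EvenLatchP OddLatchP → Value := fun _ => Value.X

/-- The counterexample trace `[SNK-, C+, B-, C-, SNK+, SNK-, C+, B+, C-]`
(events fired in this order; head of the list is the most recent event). -/
def counterTrace : List (Event (Latch EvenLatchP OddLatchP)) :=
  [.Fall (.E .C), .Rise (.O .B), .Rise (.E .C), .Fall (.O .SNK), .Rise (.O .SNK),
   .Fall (.E .C), .Fall (.O .B), .Rise (.E .C), .Fall (.O .SNK)]

lemma fire_ne {T : Type} (M : MarkedGraph T) (t : T) (m : Marking M) {t1 t2 : T}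
    (h : t1 ≠ t2) (p : M.place t1 t2) :
    M.fire t m t1 t2 p =
      if t2 = t then m t1 t2 p - 1 else if t1 = t then m t1 t2 p + 1 else m t1 t2 p := by
  unfold MarkedGraph.fire
  rw [if_neg]
  rintro ⟨h1, h2⟩
  exact h (h1.trans h2.symm)

lemma neighbor_ne {even odd : Type} (c : Circuit even odd) {l l' : Latch even odd}
    (hn : c.neighbor l l') : l ≠ l' := by
  cases l <;> cases l' <;> simp_all [Circuit.neighbor]

lemma rd_invariant {even odd : Type} (c : Circuit even odd)
    {t : List (Event (Latch even odd))} {m : Marking (riseDecoupled c)}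
    (h : (riseDecoupled c).reaches t m) :
    (∀ l : Latch even odd,
        m _ _ (RDPlace.fall l) + m _ _ (RDPlace.rise l) = 1) ∧
    (∀ (l l' : Latch even odd) (hn : c.neighbor l l'),
        m _ _ (RDPlace.fall l) + m _ _ (RDPlace.fallFall l l' hn)
          + m _ _ (RDPlace.fallRise l l' hn) = 1) ∧
    (∀ l : Latch even odd,
        transparency t l = .Transparent ↔ m _ _ (RDPlace.fall l) = 1) := by
  induction h with
  | nil =>
      refine ⟨fun l => ?_, fun l l' hn => ?_, fun l => ?_⟩ <;>
        simp [riseDecoupled, transparency] <;> cases hb : l.isOdd <;> simp [hb]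
  | @cons ls m0 ev hr he ih =>
      obtain ⟨ih1, ih2, ih3⟩ := ih
      have hfr : ∀ l : Latch even odd, (Event.Rise l : Event (Latch even odd)) ≠ .Fall l := by
        intro l hc; exact nomatch hc
      have hfall : ∀ l : Latch even odd,
          (riseDecoupled c).fire ev m0 _ _ (RDPlace.fall l) =
            if (Event.Fall l : Event (Latch even odd)) = ev then m0 _ _ (RDPlace.fall l) - 1
            else if (Event.Rise l : Event (Latch even odd)) = ev then m0 _ _ (RDPlace.fall l) + 1
            else m0 _ _ (RDPlace.fall l) := fun l => fire_ne _ _ _ (hfr l) _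
      have hrise : ∀ l : Latch even odd,
          (riseDecoupled c).fire ev m0 _ _ (RDPlace.rise l) =
            if (Event.Rise l : Event (Latch even odd)) = ev then m0 _ _ (RDPlace.rise l) - 1
            else if (Event.Fall l : Event (Latch even odd)) = ev then m0 _ _ (RDPlace.rise l) + 1
            else m0 _ _ (RDPlace.rise l) := by
        intro l
        exact fire_ne _ _ _ (fun hc => by cases hc) _
      have hff : ∀ (l l' : Latch even odd) (hn : c.neighbor l l'),
          (riseDecoupled c).fire ev m0 _ _ (RDPlace.fallFall l l' hn) =
            if (Event.Fall l' : Event (Latch even odd)) = ev then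
              m0 _ _ (RDPlace.fallFall l l' hn) - 1
            else if (Event.Fall l : Event (Latch even odd)) = ev then
              m0 _ _ (RDPlace.fallFall l l' hn) + 1
            else m0 _ _ (RDPlace.fallFall l l' hn) := by
        intro l l' hn
        refine fire_ne _ _ _ ?_ _
        intro hc
        exact neighbor_ne c hn (by injection hc)
      have hfrise : ∀ (l l' : Latch even odd) (hn : c.neighbor l l'),
          (riseDecoupled c).fire ev m0 _ _ (RDPlace.fallRise l l' hn) =
            if (Event.Rise l : Event (Latch even odd)) = ev then
              m0 _ _ (RDPlace.fallRise l l' hn) - 1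
            else if (Event.Fall l' : Event (Latch even odd)) = ev then
              m0 _ _ (RDPlace.fallRise l l' hn) + 1
            else m0 _ _ (RDPlace.fallRise l l' hn) := by
        intro l l' hn
        exact fire_ne _ _ _ (fun hc => by cases hc) _
      refine ⟨fun l => ?_, fun l l' hn => ?_, fun l => ?_⟩
      · rw [hfall, hrise]
        have h1 := ih1 l
        by_cases h2 : (Event.Fall l : Event (Latch even odd)) = ev
        · subst h2
          have hb : 0 < m0 _ _ (RDPlace.fall l) := he _ (RDPlace.fall l)
          rw [if_pos rfl, if_neg (hfr l), if_pos rfl]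
          omega
        · by_cases h3 : (Event.Rise l : Event (Latch even odd)) = ev
          · subst h3
            have hb : 0 < m0 _ _ (RDPlace.rise l) := he _ (RDPlace.rise l)
            rw [if_neg (hfr l).symm, if_pos rfl, if_pos rfl]
            omega
          · rw [if_neg h2, if_neg h3, if_neg h3, if_neg h2]
            exact h1
      · rw [hfall, hff, hfrise]
        have h1 := ih2 l l' hn
        have hne : (Event.Fall l : Event (Latch even odd)) ≠ .Fall l' := by
          intro hc; exact neighbor_ne c hn (by injection hc)
        by_cases h2 : (Event.Fall l : Event (Latch even odd)) = ev
        · subst h2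
          have hb : 0 < m0 _ _ (RDPlace.fall l) := he _ (RDPlace.fall l)
          rw [if_pos rfl, if_neg hne.symm, if_pos rfl, if_neg (hfr l), if_neg hne.symm]
          omega
        · by_cases h3 : (Event.Fall l' : Event (Latch even odd)) = ev
          · subst h3
            have hb : 0 < m0 _ _ (RDPlace.fallFall l l' hn) :=
              he _ (RDPlace.fallFall l l' hn)
            have h4 : (Event.Rise l : Event (Latch even odd)) ≠ .Fall l' := by
              intro hc; exact nomatch hc
            rw [if_neg h2, if_neg h4, if_pos rfl, if_neg h4, if_pos rfl]
            omega
          · by_cases h4 : (Event.Rise l : Event (Latch even odd)) = ev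
            · subst h4
              have hb : 0 < m0 _ _ (RDPlace.fallRise l l' hn) :=
                he _ (RDPlace.fallRise l l' hn)
              rw [if_neg h2, if_neg h2, if_neg h3, if_pos rfl, if_pos rfl]
              omega
            · rw [if_neg h2, if_neg h4, if_neg h3, if_neg h3, if_neg h2, if_neg h4]
              exact h1
      · rw [hfall]
        cases ev with
        | Rise x =>
            by_cases hx : x = l
            · subst hx
              have hb : 0 < m0 _ _ (RDPlace.rise x) := he _ (RDPlace.rise x)
              have h1 := ih1 x
              rw [if_neg (hfr x).symm, if_pos rfl]
              simp only [transparency, if_pos rfl]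
              constructor
              · intro _; omega
              · intro _; rfl
            · have h5 : (Event.Fall l : Event (Latch even odd)) ≠ .Rise x := by
                intro hc; exact nomatch hc
              have h6 : (Event.Rise l : Event (Latch even odd)) ≠ .Rise x := by
                intro hc; exact hx (Event.Rise.inj hc).symm
              rw [if_neg h5, if_neg h6]
              simp only [transparency, if_neg hx]
              exact ih3 l
        | Fall x =>
            by_cases hx : x = l
            · subst hx
              have hb : 0 < m0 _ _ (RDPlace.fall x) := he _ (RDPlace.fall x)
              have h1 := ih1 x
              rw [if_pos rfl]
              simp only [transparency, if_pos rfl]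
              constructor
              · intro hc; exact absurd hc (by simp)
              · intro hc; omega
            · have h5 : (Event.Fall l : Event (Latch even odd)) ≠ .Fall x := by
                intro hc; exact hx (Event.Fall.inj hc).symm
              have h6 : (Event.Rise l : Event (Latch even odd)) ≠ .Fall x := by
                intro hc; exact nomatch hc
              rw [if_neg h5, if_neg h6]
              simp only [transparency, if_neg hx]
              exact ih3 l

/-- in rise-decoupled, positive marking on `l- → l'-` (with `l'`
a right neighbor of `l`) implies `l` is opaque. -/
theorem rise_decoupled_opacity {even odd : Type} (c : Circuit even odd)
    (t : List (Event (Latch even odd))) (m : Marking (riseDecoupled c))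
    (h : (riseDecoupled c).reaches t m)
    (l l' : Latch even odd) (hn : c.neighbor l l')
    (hm : 0 < m (.Fall l) (.Fall l') (RDPlace.fallFall l l' hn)) :
    transparency t l = .Opaque := by
  obtain ⟨-, h2, h3⟩ := rd_invariant c h
  have hsum := h2 l l' hn
  have hfall : m _ _ (RDPlace.fall l) ≠ 1 := by omega
  cases ht : transparency t l with
  | Transparent => exact absurd ((h3 l).mp ht) hfall
  | Opaque => rfl
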